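/- Rank-one Weyl character formula: multiplying by the Weyl denominator 1 − e^{−α} turns the Demazure operator into the symmetrizer, namely δ((1 − e^{−α})·u) = u + s(u) for every u ∈ ℤ[M]. -/

import Mathlib

open AddMonoidAlgebra

noncomputable section

/-- The reflection `λ ↦ λ - c(λ) • α` associated to a root `α` and coroot `c`,
as an additive homomorphism of the weight lattice `M`. -/
def demazureReflection {M : Type*} [AddCommGroup M] (α : M) (c : M →+ ℤ) : M →+ M where
  toFun := fun lam => lam - c lam • α
  map_zero' := by simp
  map_add' := fun x y => by simp only [map_add, add_smul]; abel

/-- The ring endomorphism of the group algebra `ℤ[M]` induced by the reflection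
`s(λ) = λ - c(λ)·α`; it sends `e^λ` to `e^{s(λ)}`. -/
def demazureReflectionAlg {M : Type*} [AddCommGroup M] (α : M) (c : M →+ ℤ) :
    AddMonoidAlgebra ℤ M →+* AddMonoidAlgebra ℤ M :=
  mapDomainRingHom ℤ (demazureReflection α c)
/-- Rank-one Weyl character formula: δ((1 - e^{-α}) u) = u + s(u). -/
theorem demazure_weyl_character {M : Type*} [AddCommGroup M]
    [Module.Free ℤ M] [Module.Finite ℤ M]
    (α : M) (hα : α ≠ 0) (c : M →+ ℤ) (hc : c α = 2)
    (δ : AddMonoidAlgebra ℤ M →ₗ[ℤ] AddMonoidAlgebra ℤ M)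
    (hδ : ∀ u : AddMonoidAlgebra ℤ M,
      (1 - single (-α) 1) * δ u = u - single (-α) 1 * demazureReflectionAlg α c u) :
    ∀ u : AddMonoidAlgebra ℤ M,
      δ ((1 - single (-α) 1) * u) = u + demazureReflectionAlg α c u := by
  intro u
  classical
  have hUS : UniqueSums M :=
    UniqueSums.of_injective_addHom _ (Module.Free.chooseBasis ℤ M).repr.injective inferInstance
  have hdom : NoZeroDivisors (AddMonoidAlgebra ℤ M) := inferInstance
  -- the Weyl denominator is nonzero
  have hne : (1 - single (-α) 1 : AddMonoidAlgebra ℤ M) ≠ 0 := by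
    rw [sub_ne_zero]
    intro h
    rw [AddMonoidAlgebra.one_def] at h
    have hne' : -α ≠ 0 := neg_ne_zero.mpr hα
    exact hne' ((AddMonoidAlgebra.single_left_inj one_ne_zero).1 h).symm
  -- s sends e^{-α} to e^{α}
  have hs : demazureReflectionAlg α c (single (-α) 1) = single α 1 := by
    show AddMonoidAlgebra.mapDomain (demazureReflection α c) (single (-α) 1) = _
    rw [AddMonoidAlgebra.mapDomain_single]
    congr 1
    show -α - c (-α) • α = α
    rw [map_neg, hc]
    abel
  have key := hδ ((1 - single (-α) 1) * u)
  have hrhs : (1 - single (-α) 1) * u -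
      single (-α) 1 * demazureReflectionAlg α c ((1 - single (-α) 1) * u) =
      (1 - single (-α) 1) * (u + demazureReflectionAlg α c u) := by
    rw [map_mul, map_sub, map_one, hs]
    have hαα : (single (-α) 1 : AddMonoidAlgebra ℤ M) * single α 1 = 1 := by
      rw [AddMonoidAlgebra.single_mul_single, neg_add_cancel, mul_one,
        AddMonoidAlgebra.one_def]
    have hab : (single (-α) 1 : AddMonoidAlgebra ℤ M) * single α 1 = 1 := hαα
    ring_nf
    rw [hab, one_mul]
    ring
  rw [hrhs] at key
  exact mul_left_cancel₀ hne key
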